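/- arXiv:2002.11995 — 6 statements merged into one kernel-verified Lean document; each statement's English description precedes it below -/
import Mathlib

section
/- Suppose d₁ = 0, d₀ > 0, and β > μ(1 + d₀/α). Then W has exactly two fixed points (x, γ(x)) with x ∈ {0, α(β-μ)/(μd₀) - 1}, where γ(x) = αx/(μ(1+x)), and α(β-μ)/(μd₀) - 1 > 0. -/
/-- If d₁ = 0, d₀ > 0 and β > μ(1 + d₀/α), then W has exactly two nonnegative
fixed points (0, γ(0)) = (0,0) and (x₂, γ(x₂)) with x₂ = α(β-μ)/(μd₀) - 1 > 0. -/
theorem stmt_2 (α β μ d₀ : ℝ) (hα : 0 < α) (hβ : 0 < β) (hμ : 0 < μ)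
    (hd₀ : 0 < d₀) (hβμ : β > μ * (1 + d₀ / α)) :
    α * (β - μ) / (μ * d₀) - 1 > 0 ∧
    {p : ℝ × ℝ | 0 ≤ p.1 ∧ 0 ≤ p.2 ∧
        (β * p.2 - α * p.1 / (1 + p.1) - d₀ * p.1 + p.1,
         α * p.1 / (1 + p.1) - μ * p.2 + p.2) = p} =
      {((0 : ℝ), (0 : ℝ)),
       (α * (β - μ) / (μ * d₀) - 1,
        α * (α * (β - μ) / (μ * d₀) - 1) / (μ * (1 + (α * (β - μ) / (μ * d₀) - 1))))} := by
  have hαβμ : α * (β - μ) > μ * d₀ := by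
    have h := (mul_lt_mul_iff_right₀ hα).2 hβμ
    have : α * (μ * (1 + d₀ / α)) = α * μ + μ * d₀ := by
      field_simp
    nlinarith
  have hμd : (0:ℝ) < μ * d₀ := mul_pos hμ hd₀
  have hA : α * (β - μ) / (μ * d₀) - 1 > 0 := by
    rw [gt_iff_lt, sub_pos, lt_div_iff₀ hμd]
    linarith
  refine ⟨hA, ?_⟩
  set A := α * (β - μ) / (μ * d₀) with hAdef
  have hAeq : A * (μ * d₀) = α * (β - μ) := by
    rw [hAdef, div_mul_cancel₀ _ hμd.ne']
  clear_value A
  ext ⟨x, y⟩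
  simp only [Set.mem_setOf_eq, Set.mem_insert_iff, Set.mem_singleton_iff, Prod.mk.injEq]
  constructor
  · rintro ⟨hx, hy, heq⟩
    obtain ⟨h1, h2⟩ := heq
    have h1x : (0:ℝ) < 1 + x := by linarith
    have hy2 : μ * y = α * x / (1 + x) := by linarith
    have hb : β * y = α * x / (1 + x) + d₀ * x := by linarith
    -- multiply things out
    have key : x * ((β - μ) * α - μ * d₀ * (1 + x)) = 0 := by
      have e1 : μ * (β * y) = μ * (α * x / (1 + x)) + μ * (d₀ * x) := by
        rw [hb]; ring
      have e2 : β * (μ * y) = β * (α * x / (1 + x)) := by rw [hy2]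
      have e3 : β * (α * x / (1 + x)) = μ * (α * x / (1 + x)) + μ * (d₀ * x) := by
        linarith [e1, e2]
      have e4 : β * (α * x) = μ * (α * x) + μ * (d₀ * x) * (1 + x) := by
        have := congrArg (· * (1 + x)) e3
        field_simp at this
        linarith
      nlinarith
    rcases mul_eq_zero.1 key with hx0 | hx2
    · left
      subst hx0
      have : μ * y = 0 := by simpa using hy2
      have : y = 0 := by
        rcases mul_eq_zero.1 this with h | h
        · exact absurd h (ne_of_gt hμ)
        · exact h
      exact ⟨rfl, this⟩
    · right
      have hxA : x = A - 1 := by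
        have : μ * d₀ * (1 + x) = (β - μ) * α := by linarith
        have h1x' : 1 + x = A := by
          rw [hAdef, eq_div_iff hμd.ne']
          linarith
        linarith
      refine ⟨hxA, ?_⟩
      have h1x' : 1 + x = A := by linarith
      have : y = α * x / (μ * (1 + x)) := by
        field_simp
        rw [mul_comm] at hy2
        field_simp at hy2
        linarith
      rw [this, hxA]
  · rintro (⟨hx0, hy0⟩ | ⟨hx0, hy0⟩)
    · subst hx0; subst hy0
      norm_num
    · subst hx0; subst hy0
      have hApos : (0:ℝ) < A := by linarith
      refine ⟨by linarith, ?_, ?_⟩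
      · have : α * (A - 1) / (μ * (1 + (A - 1))) ≥ 0 := by
          apply div_nonneg
          · nlinarith
          · nlinarith
        simpa using this
      · have h1A : 1 + (A - 1) = A := by ring
        constructor
        · rw [h1A]
          have hAne : A ≠ 0 := ne_of_gt hApos
          field_simp
          linear_combination (-1) * hAeq
        · rw [h1A]
          have hAne : A ≠ 0 := ne_of_gt hApos
          field_simp
          ring
end

section
/- Suppose d₁ > 0 and β > μ(1 + d₀/α). Then Δ := (d₀-d₁)² + 4αd₁(β-μ)/μ > 0 (in fact the quadratic d₁x² + (d₀+d₁)x + d₀ + α(1-β/μ) has a unique positive root x₂ = (√Δ - d₀ - d₁)/(2d₁) > 0), and W has exactly two nonnegative fixed points (0,0) and (x₂, αx₂/(μ(1+x₂))). -/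
set_option maxHeartbeats 1000000

/-- If d₁ > 0 and β > μ(1 + d₀/α), then Δ = (d₀-d₁)² + 4αd₁(β-μ)/μ > 0,
x₂ = (√Δ - d₀ - d₁)/(2d₁) is the unique positive root of the quadratic
d₁x² + (d₀+d₁)x + d₀ + α(1-β/μ), and W has exactly two nonnegative fixed points. -/
theorem stmt_3 (α β μ d₀ d₁ : ℝ) (hα : 0 < α) (hβ : 0 < β) (hμ : 0 < μ)
    (hd₀ : 0 ≤ d₀) (hd₁ : 0 < d₁) (hβμ : β > μ * (1 + d₀ / α)) :
    (d₀ - d₁) ^ 2 + 4 * α * d₁ * (β - μ) / μ > 0 ∧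
    (Real.sqrt ((d₀ - d₁) ^ 2 + 4 * α * d₁ * (β - μ) / μ) - d₀ - d₁) / (2 * d₁) > 0 ∧
    (∀ x : ℝ, 0 < x →
      (d₁ * x ^ 2 + (d₀ + d₁) * x + d₀ + α * (1 - β / μ) = 0 ↔
        x = (Real.sqrt ((d₀ - d₁) ^ 2 + 4 * α * d₁ * (β - μ) / μ) - d₀ - d₁) / (2 * d₁))) ∧
    {p : ℝ × ℝ | 0 ≤ p.1 ∧ 0 ≤ p.2 ∧
        (β * p.2 - α * p.1 / (1 + p.1) - (d₀ + d₁ * p.1) * p.1 + p.1,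
         α * p.1 / (1 + p.1) - μ * p.2 + p.2) = p} =
      {((0 : ℝ), (0 : ℝ)),
       ((Real.sqrt ((d₀ - d₁) ^ 2 + 4 * α * d₁ * (β - μ) / μ) - d₀ - d₁) / (2 * d₁),
        α * ((Real.sqrt ((d₀ - d₁) ^ 2 + 4 * α * d₁ * (β - μ) / μ) - d₀ - d₁) / (2 * d₁)) /
          (μ * (1 + (Real.sqrt ((d₀ - d₁) ^ 2 + 4 * α * d₁ * (β - μ) / μ) - d₀ - d₁) / (2 * d₁))))} := by
  have hμ0 : μ ≠ 0 := hμ.ne'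
  have hd10 : (d₁ : ℝ) ≠ 0 := hd₁.ne'
  have hc' : d₀ * μ < α * (β - μ) := by
    have h1 : α * β > α * (μ * (1 + d₀ / α)) := (mul_lt_mul_iff_right₀ hα).2 hβμ
    have h2 : α * (μ * (1 + d₀ / α)) = α * μ + μ * d₀ := by field_simp
    nlinarith
  have hβμ' : β > μ := by nlinarith [mul_nonneg hd₀ hμ.le]
  have key6 : 4 * d₀ * d₁ < 4 * α * d₁ * (β - μ) / μ := by
    rw [lt_div_iff₀ hμ]
    nlinarith [mul_pos hd₁ (show (0:ℝ) < α * (β - μ) - d₀ * μ by linarith)]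
  have hΔpos : (0:ℝ) < (d₀ - d₁) ^ 2 + 4 * α * d₁ * (β - μ) / μ := by
    nlinarith [sq_nonneg (d₀ - d₁), sq_nonneg (d₀ + d₁), mul_nonneg hd₀ hd₁.le]
  set s := Real.sqrt ((d₀ - d₁) ^ 2 + 4 * α * d₁ * (β - μ) / μ) with hsdef
  have hs2 : s ^ 2 = (d₀ - d₁) ^ 2 + 4 * α * d₁ * (β - μ) / μ := Real.sq_sqrt hΔpos.le
  have hs2μ : μ * s ^ 2 = μ * (d₀ - d₁) ^ 2 + 4 * α * d₁ * (β - μ) := by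
    rw [hs2]; field_simp
  have hs0 : 0 < s := Real.sqrt_pos.2 hΔpos
  have h6 : (d₀ + d₁) ^ 2 < s ^ 2 := by rw [hs2]; nlinarith
  have hsb : s > d₀ + d₁ := by nlinarith
  set x₂ := (s - d₀ - d₁) / (2 * d₁) with hx₂def
  have hx₂pos : 0 < x₂ := div_pos (by linarith) (by linarith)
  have hQiff : ∀ x : ℝ, d₁ * x ^ 2 + (d₀ + d₁) * x + d₀ + α * (1 - β / μ) =
      (μ * (d₁ * x ^ 2 + (d₀ + d₁) * x + d₀) + α * (μ - β)) / μ := by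
    intro x; field_simp
  have hx2sq : d₁ * x₂ ^ 2 + (d₀ + d₁) * x₂ = (s ^ 2 - (d₀ + d₁) ^ 2) / (4 * d₁) := by
    rw [hx₂def]; field_simp; ring
  have hqμ₂ : μ * (d₁ * x₂ ^ 2 + (d₀ + d₁) * x₂ + d₀) + α * (μ - β) = 0 := by
    rw [show d₁ * x₂ ^ 2 + (d₀ + d₁) * x₂ + d₀ =
        (s ^ 2 - (d₀ + d₁) ^ 2) / (4 * d₁) + d₀ by rw [← hx2sq]]
    field_simp
    linear_combination hs2μ
  have hq₂ : d₁ * x₂ ^ 2 + (d₀ + d₁) * x₂ + d₀ + α * (1 - β / μ) = 0 := by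
    rw [hQiff, div_eq_zero_iff]; exact Or.inl hqμ₂
  have key : ∀ x : ℝ, 0 < x →
      (d₁ * x ^ 2 + (d₀ + d₁) * x + d₀ + α * (1 - β / μ) = 0 ↔ x = x₂) := by
    intro x hx
    constructor
    · intro hq
      rw [hQiff, div_eq_zero_iff] at hq
      have hqμ : μ * (d₁ * x ^ 2 + (d₀ + d₁) * x + d₀) + α * (μ - β) = 0 := by tauto
      have h2μ : μ * ((2 * d₁ * x + d₀ + d₁ - s) * (2 * d₁ * x + d₀ + d₁ + s)) = 0 := by
        linear_combination 4 * d₁ * hqμ - hs2μ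
      have h2 : (2 * d₁ * x + d₀ + d₁ - s) * (2 * d₁ * x + d₀ + d₁ + s) = 0 := by
        rcases mul_eq_zero.1 h2μ with h | h
        · exact absurd h hμ0
        · exact h
      rcases mul_eq_zero.1 h2 with h | h
      · rw [hx₂def, eq_div_iff (show (2*d₁:ℝ) ≠ 0 by positivity)]; linarith
      · nlinarith
    · rintro rfl; exact hq₂
  clear_value s x₂
  refine ⟨hΔpos, hx₂pos, key, ?_⟩
  have h1x₂ : (0:ℝ) < 1 + x₂ := by linarith
  have hy₂ : (0:ℝ) ≤ α * x₂ / (μ * (1 + x₂)) := by positivity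
  ext ⟨x, y⟩
  simp only [Set.mem_setOf_eq, Set.mem_insert_iff, Set.mem_singleton_iff, Prod.mk.injEq]
  constructor
  · rintro ⟨hx, hy, heq⟩
    obtain ⟨h1, h2⟩ := heq
    have h1x : (0:ℝ) < 1 + x := by linarith
    have hyx : α * x / (1 + x) = μ * y := by linarith
    have hyx' : α * x = μ * y * (1 + x) := by
      rw [div_eq_iff h1x.ne'] at hyx; linarith [hyx]
    rcases eq_or_lt_of_le hx with h0 | hxpos
    · left
      have hμy : μ * y = 0 := by rw [← hyx, ← h0]; simp
      exact ⟨h0.symm, by rcases mul_eq_zero.1 hμy with h | h; exact absurd h hμ0; exact h⟩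
    · right
      have hby' : β * y = μ * y + (d₀ + d₁ * x) * x := by linarith
      have h8 : x * ((β - μ) * α) = x * (μ * (1 + x) * (d₀ + d₁ * x)) := by
        linear_combination (β - μ) * hyx' + μ * (1 + x) * hby'
      have h9 := mul_left_cancel₀ hxpos.ne' h8
      have hqμ : μ * (d₁ * x ^ 2 + (d₀ + d₁) * x + d₀) + α * (μ - β) = 0 := by
        linear_combination -h9
      have hq : d₁ * x ^ 2 + (d₀ + d₁) * x + d₀ + α * (1 - β / μ) = 0 := by
        rw [hQiff, div_eq_zero_iff]; exact Or.inl hqμ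
      have hxe : x = x₂ := (key x hxpos).1 hq
      subst hxe
      refine ⟨rfl, ?_⟩
      rw [eq_div_iff (by positivity)]
      linarith [hyx']
  · rintro (⟨hx0, hy0⟩ | ⟨hx0, hy0⟩)
    · subst hx0; subst hy0; norm_num
    · subst hx0; subst hy0
      refine ⟨hx₂pos.le, hy₂, ?_⟩
      constructor
      · have hP : α * (β - μ) * x = μ * (1 + x) * ((d₀ + d₁ * x) * x) := by
          linear_combination (-x) * hqμ₂
        have h10 : β * (α * x / (μ * (1 + x))) - α * x / (1 + x) - (d₀ + d₁ * x) * x = 0 := by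
          have h1xx : (0:ℝ) < 1 + x := by linarith
          field_simp
          linear_combination hP
        linarith
      · field_simp
        ring
end

section
/- The map W₀ : S → S, W₀(x,y) = (βy - αx/(1+x) + x, αx/(1+x) - βy + y), is well defined (maps the simplex S = {(x,y) : x,y ≥ 0, x+y = 1} into itself) if and only if (β ∈ (0, 1/2) and 0 < α ≤ 1 + 2√(β(1-β))) or (β ∈ [1/2, 1] and 0 < α ≤ 2). -/
/-- W₀ maps the simplex S = {(x,y) : x,y ≥ 0, x+y = 1} into itself iff
(0 < β < 1/2 and 0 < α ≤ 1 + 2√(β(1-β))) or (1/2 ≤ β ≤ 1 and 0 < α ≤ 2). -/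
theorem stmt_8 (α β : ℝ) (hα : 0 < α) (hβ : 0 < β) :
    (∀ x y : ℝ, 0 ≤ x → 0 ≤ y → x + y = 1 →
        0 ≤ β * y - α * x / (1 + x) + x ∧
        0 ≤ α * x / (1 + x) - β * y + y ∧
        (β * y - α * x / (1 + x) + x) + (α * x / (1 + x) - β * y + y) = 1) ↔
      ((0 < β ∧ β < 1 / 2 ∧ 0 < α ∧ α ≤ 1 + 2 * Real.sqrt (β * (1 - β))) ∨
       (1 / 2 ≤ β ∧ β ≤ 1 ∧ 0 < α ∧ α ≤ 2)) := by
  constructor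
  · intro H
    have hβ1 : β ≤ 1 := by
      have h := (H 0 1 le_rfl zero_le_one (by norm_num)).2.1
      norm_num at h
      linarith
    have hα2 : α ≤ 2 := by
      have h := (H 1 0 zero_le_one le_rfl (by norm_num)).1
      norm_num at h
      linarith
    by_cases hb : 1 / 2 ≤ β
    · exact Or.inr ⟨hb, hβ1, hα, hα2⟩
    · push_neg at hb
      refine Or.inl ⟨hβ, hb, hα, ?_⟩
      by_cases ha1 : α ≤ 1
      · have hs : 0 ≤ Real.sqrt (β * (1 - β)) := Real.sqrt_nonneg _
        linarith
      push_neg at ha1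
      have h1β : 0 < 1 - β := by linarith
      set x₀ : ℝ := (α - 1) / (2 * (1 - β)) with hx0
      have hx0pos : 0 ≤ x₀ := div_nonneg (by linarith) (by linarith)
      have hx0le : x₀ ≤ 1 := by
        rw [hx0, div_le_one (by linarith)]
        linarith
      have hd : 2 * (1 - β) * x₀ = α - 1 := by
        rw [hx0]
        field_simp
      have h := (H x₀ (1 - x₀) hx0pos (by linarith) (by ring)).1
      have hden : (0:ℝ) < 1 + x₀ := by linarith
      have h2 : α * x₀ ≤ (β * (1 - x₀) + x₀) * (1 + x₀) := by
        rw [← div_le_iff₀ hden]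
        linarith
      have key : (α - 1) ^ 2 ≤ 4 * (β * (1 - β)) := by
        nlinarith [mul_le_mul_of_nonneg_left h2 h1β.le, hd, sq_nonneg x₀]
      have hs : (α - 1) / 2 ≤ Real.sqrt (β * (1 - β)) := by
        rw [Real.le_sqrt (by linarith) (by nlinarith)]
        nlinarith [key]
      linarith
  · rintro h x y hx hy hxy
    have hx1 : x ≤ 1 := by linarith
    have hden : (0:ℝ) < 1 + x := by linarith
    have hy' : y = 1 - x := by linarith
    have hβ1 : β ≤ 1 := by
      rcases h with ⟨_, h2, _⟩ | ⟨_, h2, _⟩ <;> linarith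
    have hdiv : 0 ≤ α * x / (1 + x) := div_nonneg (mul_nonneg hα.le hx) hden.le
    have hg : 0 ≤ (1 - β) * x ^ 2 + (1 - α) * x + β := by
      rcases h with ⟨hb0, hb, ha0, ha⟩ | ⟨hb1, hb2, ha0, ha2⟩
      · by_cases ha1 : α ≤ 1
        · nlinarith [mul_nonneg hx hx]
        · push_neg at ha1
          have hs0 : 0 ≤ Real.sqrt (β * (1 - β)) := Real.sqrt_nonneg _
          have hs2 : Real.sqrt (β * (1 - β)) ^ 2 = β * (1 - β) :=
            Real.sq_sqrt (by nlinarith)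
          have hle : α - 1 ≤ 2 * Real.sqrt (β * (1 - β)) := by linarith
          have hq : (α - 1) ^ 2 ≤ 4 * (β * (1 - β)) := by nlinarith
          nlinarith [sq_nonneg (2 * (1 - β) * x - (α - 1))]
      · have h1 : 0 ≤ (1 - x) * (β - (1 - β) * x) := by
          apply mul_nonneg (by linarith)
          nlinarith
        nlinarith
    have hfirst : 0 ≤ β * y - α * x / (1 + x) + x := by
      rw [hy']
      have : α * x / (1 + x) ≤ β * (1 - x) + x := by
        rw [div_le_iff₀ hden]
        nlinarith
      linarith
    refine ⟨hfirst, ?_, ?_⟩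
    · rw [hy']
      nlinarith
    · rw [hy']
      field_simp
      ring
end

section
/- If (α,β) ∈ (A ∪ B) \ {(2,1)}, where A = {(α,β) : 0 < β < 1/2, 0 < α ≤ 1 + 2√(β(1-β))} and B = {(α,β) : 1/2 ≤ β ≤ 1, 0 < α ≤ 2}, then |U'(x*)| < 1, i.e. the fixed point x* = (√(α²+4β²) - α)/(2β) of U(x) = β(1-x) - αx/(1+x) + x is attracting. -/
/-- If (α,β) ∈ (A ∪ B) \ {(2,1)} then the fixed point x* of U is attracting:
|U'(x*)| < 1. -/
theorem stmt_13 (α β : ℝ)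
    (hAB : (0 < β ∧ β < 1 / 2 ∧ 0 < α ∧ α ≤ 1 + 2 * Real.sqrt (β * (1 - β))) ∨
           (1 / 2 ≤ β ∧ β ≤ 1 ∧ 0 < α ∧ α ≤ 2))
    (hne : (α, β) ≠ (2, 1)) :
    |deriv (fun x : ℝ => β * (1 - x) - α * x / (1 + x) + x)
        ((Real.sqrt (α ^ 2 + 4 * β ^ 2) - α) / (2 * β))| < 1 := by
  -- Extract the basic bounds
  have hβ0 : 0 < β := by
    rcases hAB with ⟨h, _⟩ | ⟨h, _, _⟩ <;> linarith
  have hα0 : 0 < α := by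
    rcases hAB with ⟨_, _, h, _⟩ | ⟨_, _, h, _⟩ <;> linarith
  have hβ1 : β ≤ 1 := by
    rcases hAB with ⟨_, h, _, _⟩ | ⟨_, h, _, _⟩ <;> linarith
  have hα2 : α ≤ 2 := by
    rcases hAB with ⟨hb, hb2, _, h⟩ | ⟨_, _, _, h⟩
    · have h4 : β * (1 - β) ≤ 1 / 4 := by nlinarith
      have hs : Real.sqrt (β * (1 - β)) ≤ 1 / 2 := by
        have := Real.sqrt_le_sqrt h4
        have h14 : Real.sqrt (1 / 4 : ℝ) = 1 / 2 := by
          rw [show (1 / 4 : ℝ) = (1 / 2) ^ 2 by norm_num, Real.sqrt_sq (by norm_num)]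
        linarith [this, h14.le]
      linarith
    · exact h
  have hcase : β < 1 ∨ α < 2 := by
    rcases hAB with ⟨_, h, _, _⟩ | _
    · left; linarith
    · by_cases hb : β < 1
      · exact Or.inl hb
      · right
        have hb1 : β = 1 := le_antisymm hβ1 (not_lt.mp hb)
        have : α ≠ 2 := by
          intro h2; exact hne (by rw [h2, hb1])
        exact lt_of_le_of_ne hα2 this
  set s := Real.sqrt (α ^ 2 + 4 * β ^ 2) with hs_def
  set t := (s - α) / (2 * β) with ht_def
  have hs2 : s ^ 2 = α ^ 2 + 4 * β ^ 2 := Real.sq_sqrt (by positivity)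
  have hsα : α < s := by
    nlinarith [Real.sqrt_nonneg (α ^ 2 + 4 * β ^ 2), hs2]
  have ht0 : 0 < t := by
    rw [ht_def]; exact div_pos (by linarith) (by linarith)
  have ht1 : t < 1 := by
    rw [ht_def, div_lt_one (by linarith)]
    have : s < α + 2 * β := by
      nlinarith [Real.sqrt_nonneg (α ^ 2 + 4 * β ^ 2), hs2]
    linarith
  -- key fixed-point identity
  have hkey : β * t ^ 2 + α * t - β = 0 := by
    rw [ht_def]
    field_simp
    nlinarith [hs2]
  -- derivative computation
  have h1 : HasDerivAt (fun x : ℝ => β * (1 - x)) (β * (0 - 1)) t :=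
    ((hasDerivAt_const t (1 : ℝ)).sub (hasDerivAt_id t)).const_mul β
  have h2 : HasDerivAt (fun x : ℝ => α * x / (1 + x))
      ((α * 1 * (1 + t) - α * t * (0 + 1)) / (1 + t) ^ 2) t := by
    exact ((hasDerivAt_id t).const_mul α).div
      ((hasDerivAt_const t (1 : ℝ)).add (hasDerivAt_id t)) (by nlinarith)
  have hd : HasDerivAt (fun x : ℝ => β * (1 - x) - α * x / (1 + x) + x)
      (β * (0 - 1) - (α * 1 * (1 + t) - α * t * (0 + 1)) / (1 + t) ^ 2 + 1) t :=
    (h1.sub h2).add (hasDerivAt_id t)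
  rw [hd.deriv]
  have h1t : (0 : ℝ) < 1 + t := by linarith
  have hval : β * (0 - 1) - (α * 1 * (1 + t) - α * t * (0 + 1)) / (1 + t) ^ 2 + 1
      = 1 - β - α / (1 + t) ^ 2 := by
    field_simp
    ring
  rw [hval]
  have hpos : 0 < α / (1 + t) ^ 2 := by positivity
  have hmain : β * (1 + t) ^ 2 + α < 2 * (1 + t) ^ 2 := by
    rcases hcase with h | h <;> nlinarith
  have hlt2 : β + α / (1 + t) ^ 2 < 2 := by
    rw [show β + α / (1 + t) ^ 2 = (β * (1 + t) ^ 2 + α) / (1 + t) ^ 2 by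
      field_simp]
    rw [div_lt_iff₀ (by positivity)]
    linarith
  rw [abs_lt]
  constructor <;> nlinarith
end

section
/- If (α,β) ∈ (A ∪ B) \ {(2,1)} (with A, B as in the simplex-invariance condition), then U(x) = β(1-x) - αx/(1+x) + x has no periodic points of prime period 2 in [0,1]: every solution of U(U(x)) = x in [0,1] is a fixed point of U. -/
/-- If (α,β) ∈ (A ∪ B) \ {(2,1)} then U has no 2-periodic points in [0,1]:
every solution of U(U(x)) = x in [0,1] is a fixed point of U. -/
theorem stmt_16 (α β : ℝ)
    (hAB : (0 < β ∧ β < 1 / 2 ∧ 0 < α ∧ α ≤ 1 + 2 * Real.sqrt (β * (1 - β))) ∨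
           (1 / 2 ≤ β ∧ β ≤ 1 ∧ 0 < α ∧ α ≤ 2))
    (hne : (α, β) ≠ (2, 1)) :
    ∀ x ∈ Set.Icc (0 : ℝ) 1,
      (fun t : ℝ => β * (1 - t) - α * t / (1 + t) + t)
          ((fun t : ℝ => β * (1 - t) - α * t / (1 + t) + t) x) = x →
        β * (1 - x) - α * x / (1 + x) + x = x := by
  intro x hx hUU
  simp only at hUU
  obtain ⟨hx0, hx1⟩ := hx
  set y := β * (1 - x) - α * x / (1 + x) + x with hy
  clear_value y
  -- basic positivity facts
  have hb : 0 < β := by rcases hAB with ⟨h, _⟩ | ⟨h, _⟩ <;> linarith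
  have hb1 : β ≤ 1 := by rcases hAB with ⟨_, h, _⟩ | ⟨_, h, _⟩ <;> linarith
  have ha0 : 0 < α := by rcases hAB with ⟨_, _, h, _⟩ | ⟨_, _, h, _⟩ <;> linarith
  have hα2 : α ≤ 2 := by
    rcases hAB with ⟨hb0, hbh, ha0', ha⟩ | ⟨_, _, _, ha⟩
    · have h14 : β * (1 - β) ≤ 1 / 4 := by nlinarith
      have hs : Real.sqrt (β * (1 - β)) ≤ 1 / 2 := by
        have h2 := Real.sqrt_le_sqrt h14
        have h3 : Real.sqrt (1 / 4) = 1 / 2 := by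
          rw [show (1 / 4 : ℝ) = (1 / 2) ^ 2 by norm_num, Real.sqrt_sq (by norm_num)]
        linarith [h2, h3.le, h3.ge]
      linarith
    · exact ha
  have hx' : (0 : ℝ) < 1 + x := by linarith
  -- clear denominator in the definition of y
  have e1 : y * (1 + x) = β * (1 - x) * (1 + x) - α * x + x * (1 + x) := by
    rw [hy]; field_simp
  -- 1 + y > 0
  have hy1 : (0 : ℝ) < 1 + y := by
    have h1 : (0 : ℝ) ≤ β * ((1 - x) * (1 + x)) :=
      mul_nonneg hb.le (by nlinarith)
    nlinarith [e1, sq_nonneg x]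
  -- clear denominator in the 2-periodicity hypothesis
  have e2 : β * (1 - y) * (1 + y) - α * y + y * (1 + y) = x * (1 + y) := by
    have h := hUU
    field_simp [ne_of_gt hy1] at h
    linarith [h]
  by_contra hne'
  -- hne' : y ≠ x (as the goal is definitionally y = x)
  have hyx : y ≠ x := hne'
  -- key factorization
  have key : (y - x) * (2 + (1 - β) * (x + y) - α) = 0 := by
    linear_combination e1 + e2
  have hαkey : α = 2 + (1 - β) * (x + y) := by
    rcases mul_eq_zero.mp key with h | h
    · exact absurd (by linarith : y = x) hyx
    · linarith
  -- x + y > 0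
  have hs' : 0 < (x + y) * (1 + x) := by
    have h1 : (0 : ℝ) ≤ β * ((1 - x) * (1 + x)) :=
      mul_nonneg hb.le (by nlinarith)
    have h2 : α * x ≤ 2 * x := by nlinarith
    rcases eq_or_lt_of_le hx0 with h0 | h0
    · nlinarith [e1]
    · nlinarith [e1, mul_pos h0 h0]
  have hs : 0 < x + y := by
    by_contra h
    push_neg at h
    nlinarith [mul_nonneg (neg_nonneg.mpr h) hx'.le]
  -- final contradiction
  rcases lt_or_eq_of_le hb1 with hblt | hbeq
  · have : 0 < (1 - β) * (x + y) := mul_pos (by linarith) hs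
    linarith
  · have hα : α = 2 := by rw [hαkey, ← hbeq]; ring
    exact hne (by rw [hα, ← hbeq])
end

section
/- If β ∈ (0,1] and 0 < α ≤ 1 - β, then U(x) = β(1-x) - αx/(1+x) + x is strictly increasing on [0,1], and for every x₀ ∈ [0,1] the sequence xₙ = Uⁿ(x₀) converges monotonically to the unique fixed point x* = (√(α²+4β²) - α)/(2β). -/
set_option maxHeartbeats 1000000


open Filter in
/-- If β ∈ (0,1] and 0 < α ≤ 1 - β, then U is strictly increasing on [0,1],
and for every x₀ ∈ [0,1] the orbit Uⁿ(x₀) converges monotonically to the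
unique fixed point x* = (√(α²+4β²)-α)/(2β). -/
theorem stmt_18 (α β : ℝ) (hβ : 0 < β) (hβ' : β ≤ 1) (hα : 0 < α) (hα' : α ≤ 1 - β) :
    StrictMonoOn (fun x : ℝ => β * (1 - x) - α * x / (1 + x) + x) (Set.Icc 0 1) ∧
    ∀ x₀ ∈ Set.Icc (0 : ℝ) 1,
      Tendsto (fun n : ℕ => (fun x : ℝ => β * (1 - x) - α * x / (1 + x) + x)^[n] x₀)
        atTop (nhds ((Real.sqrt (α ^ 2 + 4 * β ^ 2) - α) / (2 * β))) ∧
      (Monotone (fun n : ℕ => (fun x : ℝ => β * (1 - x) - α * x / (1 + x) + x)^[n] x₀) ∨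
       Antitone (fun n : ℕ => (fun x : ℝ => β * (1 - x) - α * x / (1 + x) + x)^[n] x₀)) := by
  set f : ℝ → ℝ := fun x : ℝ => β * (1 - x) - α * x / (1 + x) + x with hf
  set s : ℝ := Real.sqrt (α ^ 2 + 4 * β ^ 2) with hsdef
  set c : ℝ := (s - α) / (2 * β) with hcdef
  have hs2 : s ^ 2 = α ^ 2 + 4 * β ^ 2 := Real.sq_sqrt (by positivity)
  have hs0 : 0 ≤ s := Real.sqrt_nonneg _
  have hsα : α < s := by nlinarith
  have hc0 : 0 < c := div_pos (by linarith) (by linarith)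
  have hc1 : c < 1 := by
    rw [hcdef, div_lt_one (by linarith)]
    nlinarith
  have hquad : β * c ^ 2 + α * c - β = 0 := by
    rw [hcdef]
    field_simp
    nlinarith
  -- strict monotonicity
  have hmono : StrictMonoOn f (Set.Icc (0:ℝ) 1) := by
    rintro x ⟨hx0, hx1⟩ y ⟨hy0, hy1⟩ hxy
    have h1x : (0:ℝ) < 1 + x := by linarith
    have h1y : (0:ℝ) < 1 + y := by linarith
    rw [← sub_pos]
    have h : f y - f x = (y - x) * ((1 - β) - α / ((1 + x) * (1 + y))) := by
      simp only [hf]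
      field_simp
      ring
    rw [h]
    apply mul_pos (by linarith)
    have hP : (1:ℝ) < (1 + x) * (1 + y) := by nlinarith
    have : α / ((1 + x) * (1 + y)) < α := by
      rw [div_lt_iff₀ (by linarith)]
      nlinarith
    linarith
  -- f maps [0,1] into [0,1]
  have hmaps : ∀ x ∈ Set.Icc (0:ℝ) 1, f x ∈ Set.Icc (0:ℝ) 1 := by
    rintro x ⟨hx0, hx1⟩
    have h1x : (0:ℝ) < 1 + x := by linarith
    have hdiv0 : 0 ≤ α * x / (1 + x) := by positivity
    have hdivle : α * x / (1 + x) ≤ α * x := by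
      rw [div_le_iff₀ h1x]; nlinarith [mul_nonneg (mul_nonneg hα.le hx0) hx0]
    constructor
    · simp only [hf]; nlinarith
    · simp only [hf]; nlinarith
  -- fixed point
  have hfix : f c = c := by
    simp only [hf]
    have h1c : (0:ℝ) < 1 + c := by linarith
    field_simp
    nlinarith [hquad]
  have hcmem : c ∈ Set.Icc (0:ℝ) 1 := ⟨hc0.le, hc1.le⟩
  -- increase below c, decrease above c
  have hup : ∀ x : ℝ, 0 ≤ x → x ≤ c → x ≤ f x := by
    intro x hx0 hxc
    have h1x : (0:ℝ) < 1 + x := by linarith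
    have h : f x - x = (β - (β * x ^ 2 + α * x)) / (1 + x) := by
      simp only [hf]; field_simp; ring
    have hnum : 0 ≤ β - (β * x ^ 2 + α * x) := by
      nlinarith [mul_nonneg (sub_nonneg.mpr hxc) (add_nonneg hx0 hc0.le),
        mul_nonneg (sub_nonneg.mpr hxc) hc0.le]
    rw [← sub_nonneg]
    have h2 : 0 ≤ (β - (β * x ^ 2 + α * x)) / (1 + x) := div_nonneg hnum h1x.le
    rw [← h] at h2
    exact h2
  have hdown : ∀ x : ℝ, c ≤ x → x ≤ 1 → f x ≤ x := by
    intro x hcx hx1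
    have h1x : (0:ℝ) < 1 + x := by linarith
    have h : x - f x = ((β * x ^ 2 + α * x) - β) / (1 + x) := by
      simp only [hf]; field_simp; ring
    have hnum : 0 ≤ (β * x ^ 2 + α * x) - β := by
      nlinarith [mul_nonneg (sub_nonneg.mpr hcx) (add_nonneg (le_trans hc0.le hcx) hc0.le),
        mul_nonneg (sub_nonneg.mpr hcx) hc0.le]
    rw [← sub_nonneg]
    have h2 : 0 ≤ (β * x ^ 2 + α * x - β) / (1 + x) := div_nonneg hnum h1x.le
    rw [← h] at h2
    linarith
  -- limit of an orbit must be the fixed point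
  have key : ∀ (a : ℕ → ℝ) (L : ℝ), 0 ≤ L → L ≤ 1 →
      (∀ n, a (n + 1) = f (a n)) → Tendsto a atTop (nhds L) → L = c := by
    intro a L hL0 hL1 hstep hL
    have h1L : (0:ℝ) < 1 + L := by linarith
    have hcont : ContinuousAt f L := by
      have h1 : (1:ℝ) + L ≠ 0 := by linarith
      simp only [hf]
      exact (((continuous_const.mul (continuous_const.sub continuous_id)).continuousAt).sub
        (((continuous_const.mul continuous_id).continuousAt).div
          ((continuous_const.add continuous_id).continuousAt) h1)).add continuousAt_id
    have h1 : Tendsto (fun n => a (n + 1)) atTop (nhds L) := hL.comp (tendsto_add_atTop_nat 1)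
    have h2 : Tendsto (fun n => f (a n)) atTop (nhds (f L)) := hcont.tendsto.comp hL
    have h3 : (fun n => a (n + 1)) = fun n => f (a n) := funext hstep
    have hfL : f L = L := tendsto_nhds_unique h2 (h3 ▸ h1)
    -- derive quadratic for L
    have hLquad : β * L ^ 2 + α * L - β = 0 := by
      have h : f L - L = (β - (β * L ^ 2 + α * L)) / (1 + L) := by
        simp only [hf]; field_simp; ring
      rw [hfL, sub_self] at h
      have := (div_eq_zero_iff.mp h.symm).resolve_right (by linarith)
      linarith
    have hfac : (L - c) * (β * (L + c) + α) = 0 := by nlinarith [hquad, hLquad]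
    have hpos : 0 < β * (L + c) + α := by nlinarith
    have := mul_eq_zero.mp hfac
    rcases this with h | h
    · linarith
    · linarith
  refine ⟨hmono, ?_⟩
  rintro x₀ hx₀
  set a : ℕ → ℝ := fun n => f^[n] x₀ with hadef
  have hstep : ∀ n, a (n + 1) = f (a n) := by
    intro n
    simp only [hadef, Function.iterate_succ_apply']
  have hin : ∀ n, a n ∈ Set.Icc (0:ℝ) 1 := by
    intro n
    induction n with
    | zero => exact hx₀
    | succ n ih => rw [hstep n]; exact hmaps _ ih
  rcases le_total x₀ c with hcase | hcase
  · -- increasing case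
    have hbnd : ∀ n, a n ≤ c := by
      intro n
      induction n with
      | zero => exact hcase
      | succ n ih =>
        rw [hstep n]
        calc f (a n) ≤ f c := hmono.monotoneOn (hin n) hcmem ih
          _ = c := hfix
    have hmonoseq : Monotone a := by
      apply monotone_nat_of_le_succ
      intro n
      rw [hstep n]
      exact hup (a n) (hin n).1 (hbnd n)
    have hbdd : BddAbove (Set.range a) := ⟨c, fun y hy => by
      obtain ⟨n, rfl⟩ := hy; exact hbnd n⟩
    have hL : Tendsto a atTop (nhds (⨆ n, a n)) := tendsto_atTop_ciSup hmonoseq hbdd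
    have hL0 : 0 ≤ ⨆ n, a n := le_trans (hin 0).1 (le_ciSup hbdd 0)
    have hL1 : (⨆ n, a n) ≤ 1 := ciSup_le fun n => (hin n).2
    have := key a _ hL0 hL1 hstep hL
    rw [this] at hL
    exact ⟨hL, Or.inl hmonoseq⟩
  · -- decreasing case
    have hbnd : ∀ n, c ≤ a n := by
      intro n
      induction n with
      | zero => exact hcase
      | succ n ih =>
        rw [hstep n]
        calc c = f c := hfix.symm
          _ ≤ f (a n) := hmono.monotoneOn hcmem (hin n) ih
    have hmonoseq : Antitone a := by
      apply antitone_nat_of_succ_le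
      intro n
      rw [hstep n]
      exact hdown (a n) (hbnd n) (hin n).2
    have hbdd : BddBelow (Set.range a) := ⟨c, fun y hy => by
      obtain ⟨n, rfl⟩ := hy; exact hbnd n⟩
    have hL : Tendsto a atTop (nhds (⨅ n, a n)) := tendsto_atTop_ciInf hmonoseq hbdd
    have hL0 : 0 ≤ ⨅ n, a n := le_ciInf fun n => (hin n).1
    have hL1 : (⨅ n, a n) ≤ 1 := le_trans (ciInf_le hbdd 0) (hin 0).2
    have := key a _ hL0 hL1 hstep hL
    rw [this] at hL
    exact ⟨hL, Or.inr hmonoseq⟩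
end
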